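/- The Proportional Plurality rule PP satisfies very strong DL-participation: for every profile ≿ with agent set N and every agent i ∈ N, PP(≿) ≿_i^{DL} PP(≿_{-i}), and PP(≿) ≻_i^{DL} PP(≿_{-i}) whenever some lottery p satisfies p ≻_i^{DL} PP(≿_{-i}). -/

import Mathlib

open Finset
open scoped Classical

/-- A complete transitive preference relation over alternatives. -/
structure Pref (α : Type*) where
  rel : α → α → Prop
  total : ∀ a b, rel a b ∨ rel b a
  trans : ∀ a b c, rel a b → rel b c → rel a c

/-- Strict (asymmetric) part of a relation. -/
def strictly {β : Type*} (R : β → β → Prop) (x y : β) : Prop := R x y ∧ ¬ R y x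

variable {α : Type*} [Fintype α]

/-- A lottery: nonnegative weights summing to one. -/
def IsLottery (p : α → ℝ) : Prop := (∀ a, 0 ≤ p a) ∧ ∑ a, p a = 1

/-- Probability assigned by `p` to the upper contour set of `y`. -/
noncomputable def upperSum (R : Pref α) (p : α → ℝ) (y : α) : ℝ :=
  ∑ x ∈ univ.filter (fun x => R.rel x y), p x

/-- Stochastic dominance: `p` SD-dominates `q`. -/
def SDrel (R : Pref α) (p q : α → ℝ) : Prop := ∀ y, upperSum R q y ≤ upperSum R p y

/-- Probability assigned by `p` to the indifference class of `a`. -/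
noncomputable def classSum (R : Pref α) (p : α → ℝ) (a : α) : ℝ :=
  ∑ x ∈ univ.filter (fun x => R.rel x a ∧ R.rel a x), p x

/-- Downward lexicographic extension: equal on all classes, or strictly more
probability on some class while agreeing on all strictly preferred classes. -/
def DLrel (R : Pref α) (p q : α → ℝ) : Prop :=
  (∀ a, classSum R p a = classSum R q a) ∨
  (∃ a, classSum R q a < classSum R p a ∧
    ∀ b, strictly R.rel b a → classSum R p b = classSum R q b)

/-- A lottery extension: maps each preference to a relation on lotteries. -/
def LotteryExt (α : Type*) [Fintype α] := Pref α → (α → ℝ) → (α → ℝ) → Prop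

/-- A complete lottery extension. -/
def CompleteExt (E : LotteryExt α) : Prop := ∀ (R : Pref α) p q, IsLottery p → IsLottery q → E R p q ∨ E R q p

/-- `E` is a refinement of SD. -/
def RefinesSD (E : LotteryExt α) : Prop :=
  (∀ (R : Pref α) p q, SDrel R p q → E R p q) ∧
  (∀ (R : Pref α) p q, strictly (SDrel R) p q → strictly (E R) p q)

/-- A social decision scheme: agents are natural numbers; a profile is a finite
set of agents together with their preferences. -/
def SDS (α : Type*) [Fintype α] := Finset ℕ → (ℕ → Pref α) → (α → ℝ)

/-- `f` always returns lotteries. -/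
def IsSDS (f : SDS α) : Prop := ∀ N pref, IsLottery (f N pref)

/-- `E`-participation: abstaining is never strictly better. -/
def Participation (E : LotteryExt α) (f : SDS α) : Prop :=
  ∀ (N : Finset ℕ) (pref : ℕ → Pref α) (i : ℕ), i ∈ N →
    ¬ strictly (E (pref i)) (f (N.erase i) pref) (f N pref)

/-- Strong `E`-participation: participating is at least as good as abstaining. -/
def StrongParticipation (E : LotteryExt α) (f : SDS α) : Prop :=
  ∀ (N : Finset ℕ) (pref : ℕ → Pref α) (i : ℕ), i ∈ N →
    E (pref i) (f N pref) (f (N.erase i) pref)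

/-- Very strong `E`-participation: participating is at least as good, and is
strictly better whenever some lottery is strictly `E`-better than the
abstention outcome. -/
def VeryStrongParticipation (E : LotteryExt α) (f : SDS α) : Prop :=
  ∀ (N : Finset ℕ) (pref : ℕ → Pref α) (i : ℕ), i ∈ N →
    E (pref i) (f N pref) (f (N.erase i) pref) ∧
    ((∃ p, IsLottery p ∧ strictly (E (pref i)) p (f (N.erase i) pref)) →
      strictly (E (pref i)) (f N pref) (f (N.erase i) pref))

/-- The top indifference class of a preference. -/
noncomputable def topClass (R : Pref α) : Finset α :=
  univ.filter (fun a => ∀ b, R.rel a b)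

/-- Proportional Plurality: each agent splits one point uniformly over his top
indifference class; probabilities are points divided by the number of agents. -/
noncomputable def PP : SDS α := fun N pref a =>
  if N.Nonempty then
    (∑ i ∈ N, if a ∈ topClass (pref i) then (1 : ℝ) / (topClass (pref i)).card else 0) / N.card
  else (1 : ℝ) / Fintype.card α

section Aux

lemma exists_top_on (R : Pref α) (s : Finset α) (hs : s.Nonempty) :
    ∃ a ∈ s, ∀ b ∈ s, R.rel a b := by
  classical
  induction s using Finset.induction_on with
  | empty => simp at hs
  | insert _ _ hx ih =>
    rename_i x s
    rcases s.eq_empty_or_nonempty with rfl | hs'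
    · exact ⟨x, by simp, by simpa using (R.total x x).elim id id⟩
    · obtain ⟨a, ha, hab⟩ := ih hs'
      rcases R.total a x with h | h
      · refine ⟨a, by simp [ha], ?_⟩
        intro b hb
        rcases Finset.mem_insert.mp hb with rfl | hb
        · exact h
        · exact hab b hb
      · refine ⟨x, by simp, ?_⟩
        intro b hb
        rcases Finset.mem_insert.mp hb with rfl | hb
        · exact (R.total b b).elim id id
        · exact R.trans _ _ _ h (hab b hb)

lemma mem_topClass {R : Pref α} {a : α} : a ∈ topClass R ↔ ∀ b, R.rel a b := by
  simp [topClass]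

lemma topClass_nonempty [Nonempty α] (R : Pref α) : (topClass R).Nonempty := by
  obtain ⟨a, _, ha⟩ := exists_top_on R Finset.univ Finset.univ_nonempty
  exact ⟨a, mem_topClass.mpr fun b => ha b (Finset.mem_univ b)⟩

lemma classFilter_eq_top {R : Pref α} {a : α} (ha : a ∈ topClass R) :
    Finset.univ.filter (fun x => R.rel x a ∧ R.rel a x) = topClass R := by
  ext x
  simp only [Finset.mem_filter, Finset.mem_univ, true_and, mem_topClass]
  constructor
  · rintro ⟨hx, -⟩ b
    exact R.trans _ _ _ hx (mem_topClass.mp ha b)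
  · intro hx
    exact ⟨hx a, mem_topClass.mp ha x⟩

lemma classSum_top {R : Pref α} {a : α} (ha : a ∈ topClass R) (p : α → ℝ) :
    classSum R p a = ∑ x ∈ topClass R, p x := by
  rw [classSum, classFilter_eq_top ha]

lemma classSum_zero {R : Pref α} {a : α} {p : α → ℝ} (ha : a ∉ topClass R)
    (h0 : ∀ x, x ∉ topClass R → p x = 0) : classSum R p a = 0 := by
  apply Finset.sum_eq_zero
  intro x hx
  simp only [Finset.mem_filter, Finset.mem_univ, true_and] at hx
  apply h0
  intro hxt
  exact ha (mem_topClass.mpr fun b => R.trans _ _ _ hx.2 (mem_topClass.mp hxt b))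

lemma sum_le_one_of_lottery {p : α → ℝ} (hp : IsLottery p) (s : Finset α) :
    ∑ x ∈ s, p x ≤ 1 := by
  rw [← hp.2]
  exact Finset.sum_le_sum_of_subset_of_nonneg (Finset.subset_univ s)
    (fun i _ _ => hp.1 i)

lemma zero_off_of_sum_eq_one {p : α → ℝ} (hp : IsLottery p) {s : Finset α}
    (h : ∑ x ∈ s, p x = 1) : ∀ a, a ∉ s → p a = 0 := by
  have hsd : ∑ x ∈ Finset.univ \ s, p x = 0 := by
    have := Finset.sum_sdiff (f := p) (Finset.subset_univ s)
    rw [hp.2, h] at this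
    linarith
  intro a ha
  exact (Finset.sum_eq_zero_iff_of_nonneg (fun i _ => hp.1 i)).mp hsd a
    (Finset.mem_sdiff.mpr ⟨Finset.mem_univ a, ha⟩)

lemma w_sum_univ [Nonempty α] (R : Pref α) :
    ∑ a, (if a ∈ topClass R then (1 : ℝ) / (topClass R).card else 0) = 1 := by
  rw [Finset.sum_ite_mem, Finset.univ_inter, Finset.sum_const, nsmul_eq_mul]
  have hc : ((topClass R).card : ℝ) ≠ 0 := by
    exact_mod_cast Finset.card_ne_zero_of_mem (topClass_nonempty R).choose_spec
  field_simp

lemma w_nonneg (R : Pref α) (T : Finset α) :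
    0 ≤ ∑ a ∈ T, (if a ∈ topClass R then (1 : ℝ) / (topClass R).card else 0) := by
  apply Finset.sum_nonneg
  intro a _
  split <;> positivity

lemma w_le_one [Nonempty α] (R : Pref α) (T : Finset α) :
    ∑ a ∈ T, (if a ∈ topClass R then (1 : ℝ) / (topClass R).card else 0) ≤ 1 := by
  have h := Finset.sum_le_sum_of_subset_of_nonneg (Finset.subset_univ T)
    (fun a _ _ => by split <;> positivity :
      ∀ a ∈ Finset.univ, a ∉ T → 0 ≤ (if a ∈ topClass R then (1 : ℝ) / (topClass R).card else 0))
  exact h.trans_eq (w_sum_univ R)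

lemma w_self [Nonempty α] (R : Pref α) :
    ∑ a ∈ topClass R, (if a ∈ topClass R then (1 : ℝ) / (topClass R).card else 0) = 1 := by
  rw [Finset.sum_congr rfl (fun a ha => if_pos ha), Finset.sum_const, nsmul_eq_mul]
  have hc : ((topClass R).card : ℝ) ≠ 0 := by
    exact_mod_cast Finset.card_ne_zero_of_mem (topClass_nonempty R).choose_spec
  field_simp

lemma PP_isLottery [Nonempty α] (N : Finset ℕ) (pref : ℕ → Pref α) :
    IsLottery (PP (α := α) N pref) := by
  constructor
  · intro a
    unfold PP
    split
    · apply div_nonneg _ (Nat.cast_nonneg _)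
      apply Finset.sum_nonneg
      intro j _
      split <;> positivity
    · positivity
  · unfold PP
    split
    · rename_i hN
      rw [← Finset.sum_div, Finset.sum_comm]
      rw [Finset.sum_congr rfl (fun j _ => w_sum_univ (pref j)), Finset.sum_const,
        nsmul_eq_mul, mul_one]
      have hc : ((N.card : ℝ)) ≠ 0 := by
        exact_mod_cast Finset.card_ne_zero_of_mem hN.choose_spec
      field_simp
    · rw [Finset.sum_const, Finset.card_univ, nsmul_eq_mul]
      have hc : ((Fintype.card α : ℝ)) ≠ 0 := by
        exact_mod_cast Fintype.card_ne_zero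
      field_simp

lemma tSum_PP (N : Finset ℕ) (pref : ℕ → Pref α) (hN : N.Nonempty) (T : Finset α) :
    ∑ a ∈ T, PP N pref a
      = (∑ j ∈ N, ∑ a ∈ T,
          (if a ∈ topClass (pref j) then (1 : ℝ) / (topClass (pref j)).card else 0)) / N.card := by
  unfold PP
  simp only [if_pos hN]
  rw [← Finset.sum_div, Finset.sum_comm]

lemma key_ineq [Nonempty α] (N : Finset ℕ) (pref : ℕ → Pref α) (i : ℕ) (hi : i ∈ N) :
    ∑ a ∈ topClass (pref i), PP (N.erase i) pref a
        ≤ ∑ a ∈ topClass (pref i), PP N pref a ∧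
      (∑ a ∈ topClass (pref i), PP N pref a
          = ∑ a ∈ topClass (pref i), PP (N.erase i) pref a →
        ∑ a ∈ topClass (pref i), PP (N.erase i) pref a = 1) := by
  set T := topClass (pref i) with hT
  have hN : N.Nonempty := ⟨i, hi⟩
  set w : ℕ → ℝ := fun j => ∑ a ∈ T,
    (if a ∈ topClass (pref j) then (1 : ℝ) / (topClass (pref j)).card else 0) with hw
  have hsplit : ∑ j ∈ N, w j = 1 + ∑ j ∈ N.erase i, w j := by
    rw [← Finset.add_sum_erase N w hi]
    congr 1
    simpa [hw, hT] using w_self (pref i)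
  have hpT : ∑ a ∈ T, PP N pref a = (1 + ∑ j ∈ N.erase i, w j) / N.card := by
    rw [tSum_PP N pref hN T, hsplit]
  rcases (N.erase i).eq_empty_or_nonempty with hM | hM
  · -- N = {i}
    have hcard : N.card = 1 := by
      have := Finset.card_erase_add_one hi
      rw [hM] at this
      simpa using this.symm
    have hp1 : ∑ a ∈ T, PP N pref a = 1 := by
      rw [hpT, hM, hcard]
      simp
    have hq : ∑ a ∈ T, PP (N.erase i) pref a = T.card / Fintype.card α := by
      rw [hM]
      unfold PP
      simp [Finset.sum_const, Finset.sum_div]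
      rw [div_eq_mul_inv]
    constructor
    · rw [hp1]
      exact sum_le_one_of_lottery (PP_isLottery (N.erase i) pref) T
    · intro h
      rw [← h, hp1]
  · -- erase nonempty
    have hm0 : (0 : ℝ) < (N.erase i).card := by
      exact_mod_cast Finset.card_pos.mpr hM
    have hn : (N.card : ℝ) = (N.erase i).card + 1 := by
      rw [← Finset.card_erase_add_one hi]
      push_cast
      ring
    set S : ℝ := ∑ j ∈ N.erase i, w j with hS
    have hS0 : 0 ≤ S := Finset.sum_nonneg fun j _ => w_nonneg (pref j) T
    have hSm : S ≤ (N.erase i).card := by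
      calc S ≤ ∑ _j ∈ N.erase i, (1 : ℝ) :=
              Finset.sum_le_sum fun j _ => w_le_one (pref j) T
        _ = (N.erase i).card := by simp
    have hqT : ∑ a ∈ T, PP (N.erase i) pref a = S / (N.erase i).card := by
      rw [tSum_PP (N.erase i) pref hM T]
    set m : ℝ := ((N.erase i).card : ℝ)
    constructor
    · rw [hqT, hpT, hn]
      rw [div_le_div_iff₀ hm0 (by linarith)]
      nlinarith
    · intro h
      rw [hpT, hqT, hn] at h
      have : (1 + S) * m = S * (m + 1) := by
        field_simp at h
        linarith
      have hSm' : S = m := by nlinarith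
      rw [hqT, hSm']
      field_simp

end Aux

/-- Proportional Plurality satisfies very strong DL-participation. -/
theorem PP_very_strong_DL_participation [Nonempty α] :
    VeryStrongParticipation DLrel (PP (α := α)) := by
  intro N pref i hi
  set R := pref i with hR
  set T := topClass R with hT
  set p := PP (α := α) N pref with hp
  set q := PP (α := α) (N.erase i) pref with hq
  have hpL : IsLottery p := PP_isLottery N pref
  have hqL : IsLottery q := PP_isLottery (N.erase i) pref
  obtain ⟨hle, heq1⟩ := key_ineq N pref i hi
  obtain ⟨a0, ha0⟩ := topClass_nonempty R
  have ha0top : ∀ b, R.rel a0 b := mem_topClass.mp ha0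
  rcases eq_or_lt_of_le hle with hcase | hcase
  · -- equal top sums: forced to be 1
    have hY1 : ∑ a ∈ T, q a = 1 := heq1 hcase.symm
    have hX1 : ∑ a ∈ T, p a = 1 := by rw [hcase.symm, hY1]
    have hp0 : ∀ x, x ∉ T → p x = 0 := zero_off_of_sum_eq_one hpL hX1
    have hq0 : ∀ x, x ∉ T → q x = 0 := zero_off_of_sum_eq_one hqL hY1
    have hall : ∀ a, classSum R p a = classSum R q a := by
      intro a
      by_cases ha : a ∈ T
      · rw [classSum_top ha p, classSum_top ha q, ← hT, hX1, hY1]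
      · rw [classSum_zero ha hp0, classSum_zero ha hq0]
    refine ⟨Or.inl hall, ?_⟩
    rintro ⟨r, hrL, hr1, hr2⟩
    exfalso
    apply hr2
    have hrle : ∑ a ∈ T, r a ≤ 1 := sum_le_one_of_lottery hrL T
    rcases eq_or_lt_of_le hrle with hr | hr
    · -- r also concentrated on T: all classes equal
      have hr0 : ∀ x, x ∉ T → r x = 0 := zero_off_of_sum_eq_one hrL hr
      left
      intro a
      by_cases ha : a ∈ T
      · rw [classSum_top ha q, classSum_top ha r, ← hT, hY1, hr]
      · rw [classSum_zero ha hq0, classSum_zero ha hr0]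
    · right
      refine ⟨a0, ?_, ?_⟩
      · rw [classSum_top ha0 q, classSum_top ha0 r, ← hT, hY1]
        exact hr
      · intro b hb
        exact absurd (ha0top b) hb.2
  · -- strict gain
    have hDL : DLrel R p q := by
      right
      refine ⟨a0, ?_, ?_⟩
      · rw [classSum_top ha0 q, classSum_top ha0 p, ← hT]
        exact hcase
      · intro b hb
        exact absurd (ha0top b) hb.2
    have hne : classSum R q a0 < classSum R p a0 := by
      rw [classSum_top ha0 q, classSum_top ha0 p, ← hT]
      exact hcase
    have hnot : ¬ DLrel R q p := by
      rintro (h | ⟨c, hc1, hc2⟩)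
      · exact absurd (h a0) (ne_of_lt hne)
      · by_cases hcT : c ∈ topClass R
        · rw [classSum_top hcT q, classSum_top hcT p, ← hT] at hc1
          exact absurd hcase (not_lt.mpr hc1.le)
        · have hstr : strictly R.rel a0 c := by
            refine ⟨ha0top c, fun hca => ?_⟩
            exact hcT (mem_topClass.mpr fun b => R.trans _ _ _ hca (ha0top b))
          exact absurd (hc2 a0 hstr) (ne_of_lt hne)
    exact ⟨hDL, fun _ => ⟨hDL, hnot⟩⟩
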